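/- Let G = ⟨x, y | y² = 1, y x y⁻¹ = x⁻¹⟩ be the infinite dihedral group. The inclusion of the infinite cyclic subgroup ⟨x⟩ into G is an envelope, and its Galois group {f ∈ Aut(G) : f restricts to the identity on ⟨x⟩} is isomorphic to ℤ. -/

import Mathlib

/-- The embedding of the (additively written) group `ZMod n` as the rotation
subgroup ⟨x⟩ of the dihedral group `DihedralGroup n`; for n = 0 this is the
infinite cyclic subgroup ⟨x⟩ of the infinite dihedral group ⟨x, y ∣ y² = 1, xʸ = x⁻¹⟩. -/
def rotHom (n : ℕ) : Multiplicative (ZMod n) →* DihedralGroup n where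
  toFun x := DihedralGroup.r x.toAdd
  map_one' := rfl
  map_mul' _ _ := rfl

/-- The Galois group of a homomorphism φ : H → G, i.e. {f ∈ Aut(G) : f∘φ = φ}. -/
def galGroup {H G : Type} [Group H] [Group G] (φ : H →* G) : Subgroup (MulAut G) where
  carrier := {f | ∀ h, f (φ h) = φ h}
  one_mem' _ := rfl
  mul_mem' {a b} ha hb h := by rw [MulAut.mul_apply, hb h, ha h]
  inv_mem' {a} ha h := by
    conv_lhs => rw [← ha h]
    exact a.symm_apply_apply _

namespace EnvelopeAux

open DihedralGroup Multiplicative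

abbrev D := DihedralGroup 0

lemma key {a b : D} (hb : b * b = 1) (hc : b * a = a⁻¹ * b) (i : ℤ) :
    b * a ^ i = a ^ (-i) * b := by
  have hbi : b⁻¹ = b := inv_eq_of_mul_eq_one_right hb
  have h1 : b * a * b⁻¹ = a⁻¹ := by rw [hbi, hc, mul_assoc, hb, mul_one]
  have h2 : b * a ^ i * b⁻¹ = a ^ (-i) := by
    have h3 := map_zpow (MulAut.conj b) a i
    simp only [MulAut.conj_apply] at h3
    rw [h3, h1, inv_zpow, ← zpow_neg]
  rw [← h2, inv_mul_cancel_right]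

/-- endomorphism of D∞ sending r i ↦ a^i, sr i ↦ b * a^i. -/
def dEnd (a b : D) (hb : b * b = 1) (hc : b * a = a⁻¹ * b) : D →* D where
  toFun g := match g with
    | .r i => a ^ (show ℤ from i)
    | .sr i => b * a ^ (show ℤ from i)
  map_one' := zpow_zero a
  map_mul' := by
    rintro (i | i) (j | j)
    · exact zpow_add a i j
    · show b * a ^ (show ℤ from j - i) = a ^ (show ℤ from i) * (b * a ^ (show ℤ from j))
      rw [key hb hc, key hb hc, ← mul_assoc, ← zpow_add]
      congr 2
      exact (neg_sub j i).trans (sub_eq_add_neg i j)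
    · show b * a ^ (show ℤ from i + j) = b * a ^ (show ℤ from i) * a ^ (show ℤ from j)
      rw [mul_assoc, ← zpow_add]
      rfl
    · show a ^ (show ℤ from j - i) = b * a ^ (show ℤ from i) * (b * a ^ (show ℤ from j))
      rw [key hb hc, mul_assoc, ← mul_assoc b b, hb, one_mul, ← zpow_add]
      congr 1
      exact (sub_eq_add_neg j i).trans (add_comm j (-i))

lemma dEnd_r (a b : D) (hb : b * b = 1) (hc : b * a = a⁻¹ * b) (i : ZMod 0) :
    dEnd a b hb hc (.r i) = a ^ (show ℤ from i) := rfl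

lemma hom_ofAdd (ψ : Multiplicative (ZMod 0) →* D) (i : ZMod 0) :
    ψ (ofAdd i) = (ψ (ofAdd 1)) ^ (show ℤ from i) := by
  rw [← map_zpow, ← ofAdd_zsmul]; congr 2; exact (zsmul_int_one i).symm

lemma exists_shift (f : D →* D) (hr : ∀ i : ZMod 0, f (.r i) = .r i) :
    ∃ k : ZMod 0, ∀ i, f (.sr i) = .sr (k + i) := by
  have h1 : f (sr 0) * f (sr 0) = 1 := by
    rw [← map_mul, sr_mul_sr, sub_zero, ← one_def, map_one]
  have h2 : f (sr 0) * r 1 * f (sr 0) = r (-1) := by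
    have : (sr 0 : D) * r 1 * sr 0 = r (-1) := by simp
    rw [← hr 1, ← map_mul, ← map_mul, this, hr]
  obtain ⟨k, hk⟩ : ∃ k, f (sr 0) = sr k := by
    rcases hfs : f (sr 0) with m | m
    · exfalso
      rw [hfs] at h1 h2
      have hm : m + m = (0 : ZMod 0) := by
        rw [r_mul_r, one_def] at h1; exact r.inj h1
      have hm0 : m = 0 := by
        have : (show ℤ from m) + (show ℤ from m) = 0 := hm
        have : (show ℤ from m) = 0 := by omega
        exact this
      rw [hm0] at h2
      simp only [r_mul_r, zero_add, add_zero] at h2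
      have : (1 : ZMod 0) = -1 := by simpa using h2
      have : (1 : ℤ) = -1 := this
      omega
    · exact ⟨m, rfl⟩
  refine ⟨k, fun i => ?_⟩
  have : (sr i : D) = sr 0 * r i := by rw [sr_mul_r, zero_add]
  rw [this, map_mul, hk, hr, sr_mul_r]

/-- the shift automorphism r i ↦ r i, sr i ↦ sr (k + i). -/
def shiftFun (k : ZMod 0) : D → D := fun g => match g with
  | .r i => .r i
  | .sr i => .sr (k + i)

@[simp] lemma shiftFun_r (k i : ZMod 0) : shiftFun k (.r i) = .r i := rfl
@[simp] lemma shiftFun_sr (k i : ZMod 0) : shiftFun k (.sr i) = .sr (k + i) := rfl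

def τ (k : ZMod 0) : D ≃* D where
  toFun := shiftFun k
  invFun := shiftFun (-k)
  left_inv := by rintro (i | i) <;> simp
  right_inv := by rintro (i | i) <;> simp
  map_mul' := by rintro (i | i) (j | j) <;> simp <;> ring_nf

lemma τ_mem (k : ZMod 0) : τ k ∈ galGroup (rotHom 0) := fun _ => rfl

def Φ : Multiplicative ℤ →* ↥(galGroup (rotHom 0)) where
  toFun k := ⟨τ (Multiplicative.toAdd k), τ_mem _⟩
  map_one' := by
    refine Subtype.ext (MulEquiv.ext ?_)
    rintro (i | i) <;> simp [τ] <;> rfl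
  map_mul' x y := by
    refine Subtype.ext (MulEquiv.ext ?_)
    rintro (i | i) <;> simp [τ] <;> exact add_assoc (toAdd x) (toAdd y) i

lemma Φ_bij : Function.Bijective Φ := by
  constructor
  · intro x y h
    have := congrArg (fun f => (f : ↥(galGroup (rotHom 0))).1 (sr 0)) h
    simp only [Φ, MonoidHom.coe_mk, OneHom.coe_mk] at this
    have h2 : (τ (toAdd x)) (sr 0) = (τ (toAdd y)) (sr 0) := this
    simp only [τ, MulEquiv.coe_mk, Equiv.coe_fn_mk, shiftFun_sr, add_zero] at h2
    have : toAdd x = toAdd y := by simp at h2; exact h2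
    exact toAdd.injective this
  · rintro ⟨f, hf⟩
    have hr : ∀ i : ZMod 0, f (.r i) = .r i := fun i => hf (ofAdd i)
    obtain ⟨k, hk⟩ := exists_shift f.toMonoidHom (by exact hr)
    refine ⟨ofAdd k, Subtype.ext (MulEquiv.ext ?_)⟩
    rintro (i | i)
    · exact (hr i).symm
    · exact (hk i).symm

end EnvelopeAux

open EnvelopeAux DihedralGroup Multiplicative

/-- the inclusion of the infinite cyclic subgroup ⟨x⟩ into the
infinite dihedral group G = ⟨x, y ∣ y² = 1, y x y⁻¹ = x⁻¹⟩ (= `DihedralGroup 0`,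
since `ZMod 0 = ℤ`) is an envelope, with Galois group isomorphic to ℤ. -/
theorem infinite_cyclic_in_infinite_dihedral_is_envelope :
    Function.Surjective
      (fun f : DihedralGroup 0 →* DihedralGroup 0 => f.comp (rotHom 0)) ∧
    (∀ f : DihedralGroup 0 →* DihedralGroup 0,
      f.comp (rotHom 0) = rotHom 0 → Function.Bijective f) ∧
    Nonempty (↥(galGroup (rotHom 0)) ≃* Multiplicative ℤ) := by
  refine ⟨?_, ?_, ⟨(MulEquiv.ofBijective Φ Φ_bij).symm⟩⟩
  · intro ψ
    set g := ψ (ofAdd (1 : ZMod 0)) with hg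
    obtain ⟨b, hb, hc⟩ : ∃ b : D, b * b = 1 ∧ b * g = g⁻¹ * b := by
      rcases g with k | k
      · refine ⟨sr 0, by rw [sr_mul_sr, sub_self]; rfl, ?_⟩
        show (sr (0 + k) : D) = sr (0 - -k)
        congr 1; ring
      · exact ⟨sr k, by rw [sr_mul_sr, sub_self]; rfl, rfl⟩
    refine ⟨dEnd g b hb hc, ?_⟩
    ext x
    show dEnd g b hb hc (.r x) = ψ (ofAdd x)
    rw [dEnd_r, ← hom_ofAdd]
  · intro f hf
    have hr : ∀ i : ZMod 0, f (.r i) = .r i := fun i => DFunLike.congr_fun hf (ofAdd i)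
    obtain ⟨k, hk⟩ := exists_shift f hr
    constructor
    · intro x y hxy
      rcases x with i | i <;> rcases y with j | j
      · rw [hr, hr] at hxy; exact hxy
      · rw [hr, hk] at hxy; exact absurd hxy (by simp)
      · rw [hk, hr] at hxy; exact absurd hxy (by simp)
      · rw [hk, hk] at hxy
        simp only [sr.injEq] at hxy
        rw [add_left_cancel hxy]
    · rintro (i | i)
      · exact ⟨.r i, hr i⟩
      · exact ⟨.sr (i - k), by rw [hk]; congr 1; ring⟩
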